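/- Let D be a division ring, Γ₀ a linearly ordered commutative group with zero, and v : D → Γ₀ a valuation (i.e. v(xy) = v(x)v(y), v(x+y) ≤ max(v(x), v(y)), v(1) = 1, v(0) = 0). If x ∈ D satisfies v(x − 1) < 1, x ≠ 1, and x has finite multiplicative order, then there exists a prime number p such that v(p·1_D) < 1 and the order of x is a power of p. -/
import Mathlib

private lemma val_mul_sub_one_lt {D : Type*} [DivisionRing D] {Γ₀ : Type*}
    [LinearOrderedCommGroupWithZero Γ₀] (v : Valuation D Γ₀) {a b : D}
    (ha : v (a - 1) < 1) (hb : v (b - 1) < 1) : v (a * b - 1) < 1 := by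
  have hva : v a ≤ 1 := by
    have : a = (a - 1) + 1 := by abel
    rw [this]
    exact le_trans (v.map_add _ _) (by simp [le_of_lt ha])
  have h : a * b - 1 = a * (b - 1) + (a - 1) := by noncomm_ring
  rw [h]
  refine lt_of_le_of_lt (v.map_add _ _) (max_lt ?_ ha)
  rw [v.map_mul]
  calc v a * v (b - 1) ≤ 1 * v (b - 1) := mul_le_mul_left hva _
    _ < 1 := by simpa using hb

private lemma val_pow_sub_one_lt {D : Type*} [DivisionRing D] {Γ₀ : Type*}
    [LinearOrderedCommGroupWithZero Γ₀] (v : Valuation D Γ₀) {a : D}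
    (ha : v (a - 1) < 1) : ∀ n : ℕ, v (a ^ n - 1) < 1
  | 0 => by simp
  | n + 1 => by
    rw [pow_succ]
    exact val_mul_sub_one_lt v (val_pow_sub_one_lt v ha n) ha

private lemma val_natCast_le {D : Type*} [DivisionRing D] {Γ₀ : Type*}
    [LinearOrderedCommGroupWithZero Γ₀] (v : Valuation D Γ₀) (n : ℕ) :
    v (n : D) ≤ 1 := by
  induction n with
  | zero => simp
  | succ k ih =>
    push_cast
    exact le_trans (v.map_add _ _) (by simp [ih])

private lemma val_intCast_le {D : Type*} [DivisionRing D] {Γ₀ : Type*}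
    [LinearOrderedCommGroupWithZero Γ₀] (v : Valuation D Γ₀) (n : ℤ) :
    v (n : D) ≤ 1 := by
  cases n with
  | ofNat k => simpa using val_natCast_le v k
  | negSucc k =>
    rw [Int.cast_negSucc, v.map_neg]
    exact val_natCast_le v (k + 1)

/-- If `z ≠ 1` is a `q`-th root of unity in `1 + M` for a prime `q`,
then `v q < 1`. -/
private lemma key_lemma {D : Type*} [DivisionRing D] {Γ₀ : Type*}
    [LinearOrderedCommGroupWithZero Γ₀] (v : Valuation D Γ₀) {z : D} {q : ℕ}
    (hz : v (z - 1) < 1) (hzq : z ^ q = 1) (hz1 : z ≠ 1) : v (q : D) < 1 := by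
  have hsum : (z - 1) * ∑ i ∈ Finset.range q, z ^ i = 0 := by
    rw [mul_geom_sum, hzq, sub_self]
  have hz0 : z - 1 ≠ 0 := sub_ne_zero.mpr hz1
  have hS : ∑ i ∈ Finset.range q, z ^ i = 0 := by
    rcases mul_eq_zero.mp hsum with h | h
    · exact absurd h hz0
    · exact h
  have hq : (q : D) = ∑ i ∈ Finset.range q, (1 - z ^ i) := by
    rw [Finset.sum_sub_distrib, hS, sub_zero, Finset.sum_const, Finset.card_range,
      nsmul_eq_mul, mul_one]
  rw [hq]
  refine v.map_sum_lt one_ne_zero fun i _ => ?_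
  rw [v.map_sub_swap]
  exact val_pow_sub_one_lt v hz i

/-- Every nontrivial torsion element of `1 + M` has order a power of a prime `p`
with `v (p : D) < 1` (the residue characteristic). -/
theorem order_of_torsion_in_one_add_maximalIdeal {D : Type*} [DivisionRing D] {Γ₀ : Type*}
    [LinearOrderedCommGroupWithZero Γ₀] (v : Valuation D Γ₀)
    (x : D) (hx : v (x - 1) < 1) (hx1 : x ≠ 1) (hfin : IsOfFinOrder x) :
    ∃ p : ℕ, p.Prime ∧ v (p : D) < 1 ∧ ∃ n : ℕ, orderOf x = p ^ n := by
  set m := orderOf x with hm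
  have hmpos : 0 < m := hfin.orderOf_pos
  have hm1 : m ≠ 1 := fun h => hx1 (orderOf_eq_one_iff.mp h)
  -- every prime divisor q of m satisfies v q < 1
  have hall : ∀ q : ℕ, q.Prime → q ∣ m → v (q : D) < 1 := by
    intro q hq hqm
    set z := x ^ (m / q) with hz
    have hzq : z ^ q = 1 := by
      rw [hz, ← pow_mul, Nat.div_mul_cancel hqm, hm, pow_orderOf_eq_one]
    have hzne : z ≠ 1 := by
      intro h
      have hdvd : m ∣ m / q := orderOf_dvd_of_pow_eq_one (by rw [← hz, h])
      have hpos2 : 0 < m / q := Nat.div_pos (Nat.le_of_dvd hmpos hqm) hq.pos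
      have hlt : m / q < m := Nat.div_lt_self hmpos hq.one_lt
      exact absurd (Nat.le_of_dvd hpos2 hdvd) (not_le.mpr hlt)
    have hzv : v (z - 1) < 1 := val_pow_sub_one_lt v hx _
    exact key_lemma v hzv hzq hzne
  obtain ⟨p, hp, hpm⟩ := Nat.exists_prime_and_dvd hm1
  refine ⟨p, hp, hall p hp hpm, ?_⟩
  -- uniqueness of the prime divisor
  have huniq : ∀ {d : ℕ}, d.Prime → d ∣ m → d = p := by
    intro d hd hdm
    by_contra hne
    have hcop : Nat.Coprime d p := (Nat.coprime_primes hd hp).mpr hne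
    have hbez : (1 : ℤ) = d * Nat.gcdA d p + p * Nat.gcdB d p := by
      have := Nat.gcd_eq_gcd_ab d p
      rwa [hcop, Nat.cast_one] at this
    have h1 : (1 : D) = (d : D) * ((Nat.gcdA d p : ℤ) : D)
        + (p : D) * ((Nat.gcdB d p : ℤ) : D) := by
      have := congrArg (fun t : ℤ => (t : D)) hbez
      push_cast at this ⊢
      exact this
    have : v (1 : D) < 1 := by
      rw [h1]
      refine lt_of_le_of_lt (v.map_add _ _) (max_lt ?_ ?_) <;> rw [v.map_mul]
      · calc v (d : D) * v _ ≤ v (d : D) * 1 := mul_le_mul_right (val_intCast_le v _) _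
          _ < 1 := by simpa using hall d hd hdm
      · calc v (p : D) * v _ ≤ v (p : D) * 1 := mul_le_mul_right (val_intCast_le v _) _
          _ < 1 := by simpa using hall p hp hpm
    simp at this
  exact ⟨_, Nat.eq_prime_pow_of_unique_prime_dvd hmpos.ne' huniq⟩
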